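/- (Zero outage below the guaranteed rate.) Let m, m_t, m_r be natural numbers with m_t ≤ m, m_r ≤ m and m_t + m_r > m, let ρ ≥ 0 and let r be a real number with r < m_t+m_r−m. Then μ{H ∈ U(m) : |det(I_{m_t} + ρ·H₁₁ᴴ·H₁₁)| < (1+ρ)^r} = 0; that is, a strictly zero outage probability is achievable for any transmission rate below (m_t+m_r−m)·log(1+ρ). -/

import Mathlib

open Matrix MeasureTheory

noncomputable section

instance (m : ℕ) : MeasurableSpace (Matrix.unitaryGroup (Fin m) ℂ) := borel _
instance (m : ℕ) : BorelSpace (Matrix.unitaryGroup (Fin m) ℂ) := ⟨rfl⟩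

open ComplexOrder in
/-- If `P` is positive semidefinite then `|det (1 + P)| ≥ 1`. -/
lemma one_le_abs_det_one_add {n : ℕ} {P : Matrix (Fin n) (Fin n) ℂ} (hP : P.PosSemidef) :
    1 ≤ ‖(1 + P).det‖ := by
  have hM : (1 + P).IsHermitian := Matrix.isHermitian_one.add hP.1
  have key : ∀ i, 1 ≤ hM.eigenvalues i := by
    intro i
    rw [hM.eigenvalues_eq i]
    set v := ⇑(hM.eigenvectorBasis i)
    have h1 : RCLike.re (dotProduct (star v) v) = 1 := by
      have hnorm := hM.eigenvectorBasis.orthonormal.1 i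
      have h2 : (dotProduct (star v) v)
          = inner ℂ (hM.eigenvectorBasis i) (hM.eigenvectorBasis i) := by
        rw [EuclideanSpace.inner_eq_star_dotProduct, dotProduct_comm]
      rw [h2, inner_self_eq_norm_sq_to_K, hnorm]
      simp
    rw [Matrix.add_mulVec, Matrix.one_mulVec, dotProduct_add, map_add, h1]
    have := hP.re_dotProduct_nonneg v
    linarith
  rw [hM.det_eq_prod_eigenvalues, norm_prod]
  calc (1:ℝ) = ∏ _i : Fin n, 1 := by simp
    _ ≤ ∏ i : Fin n, ‖(hM.eigenvalues i : ℂ)‖ := by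
        refine Finset.prod_le_prod (fun i _ => zero_le_one) (fun i _ => ?_)
        rw [Complex.norm_real, Real.norm_eq_abs]
        exact le_trans (key i) (le_abs_self _)

open ComplexOrder in
lemma one_le_abs_det_one_add_smul {n n' : ℕ} {t : ℝ} (ht : 0 ≤ t)
    (C : Matrix (Fin n) (Fin n') ℂ) :
    1 ≤ ‖(1 + (t:ℂ) • (C * Cᴴ)).det‖ := by
  have h0 : ((Real.sqrt t : ℂ) • C) * ((Real.sqrt t : ℂ) • C)ᴴ = (t:ℂ) • (C * Cᴴ) := by
    rw [Matrix.conjTranspose_smul, Matrix.smul_mul, Matrix.mul_smul, smul_smul]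
    congr 1
    rw [RCLike.star_def, Complex.conj_ofReal, ← Complex.ofReal_mul, Real.mul_self_sqrt ht]
  have hPSD : ((t:ℂ) • (C * Cᴴ)).PosSemidef := by
    rw [← h0]
    exact Matrix.posSemidef_self_mul_conjTranspose _
  exact one_le_abs_det_one_add hPSD

lemma sum_split {M : Type*} [AddCommMonoid M] {m k : ℕ} (hk : k ≤ m) (f : Fin m → M) :
    ∑ i, f i = ∑ i : Fin k, f (Fin.castLE hk i) +
      ∑ i : Fin (m - k), f ⟨k + i, by omega⟩ := by
  have h : k + (m - k) = m := by omega
  have e := Fintype.sum_equiv (finCongr h) (fun i => f (finCongr h i)) f (fun i => rfl)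
  rw [← e, Fin.sum_univ_add]
  refine congrArg₂ (· + ·) ?_ ?_
  · exact Finset.sum_congr rfl fun i _ => by apply congrArg; ext; simp
  · exact Finset.sum_congr rfl fun i _ => by apply congrArg; ext; simp

/-- The upper-left `m_r × m_t` block of an `m × m` matrix
(first `m_r` rows and first `m_t` columns). -/
def sub11 {m : ℕ} (mt mr : ℕ) (hmt : mt ≤ m) (hmr : mr ≤ m)
    (H : Matrix (Fin m) (Fin m) ℂ) : Matrix (Fin mr) (Fin mt) ℂ :=
  Matrix.of fun i j => H (Fin.castLE hmr i) (Fin.castLE hmt j)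

def sub21 {m : ℕ} (mt mr : ℕ) (hmt : mt ≤ m) (hmr : mr ≤ m)
    (H : Matrix (Fin m) (Fin m) ℂ) : Matrix (Fin (m - mr)) (Fin mt) ℂ :=
  Matrix.of fun i j => H ⟨mr + i, by omega⟩ (Fin.castLE hmt j)

def sub22 {m : ℕ} (mt mr : ℕ) (hmt : mt ≤ m) (hmr : mr ≤ m)
    (H : Matrix (Fin m) (Fin m) ℂ) : Matrix (Fin (m - mr)) (Fin (m - mt)) ℂ :=
  Matrix.of fun i j => H ⟨mr + i, by omega⟩ ⟨mt + j, by omega⟩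

lemma col_block {m mt mr : ℕ} (hmt : mt ≤ m) (hmr : mr ≤ m)
    {H : Matrix (Fin m) (Fin m) ℂ} (hH : Hᴴ * H = 1) :
    (sub11 mt mr hmt hmr H)ᴴ * sub11 mt mr hmt hmr H +
      (sub21 mt mr hmt hmr H)ᴴ * sub21 mt mr hmt hmr H = 1 := by
  ext j k
  have h := congrFun (congrFun hH (Fin.castLE hmt j)) (Fin.castLE hmt k)
  rw [Matrix.mul_apply] at h
  rw [Matrix.add_apply, Matrix.mul_apply, Matrix.mul_apply]
  rw [sum_split hmr (fun i => Hᴴ (Fin.castLE hmt j) i * H i (Fin.castLE hmt k))] at h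
  simp only [conjTranspose_apply, sub11, sub21, Matrix.of_apply] at h ⊢
  rw [h]
  by_cases hjk : j = k
  · subst hjk; simp
  · rw [Matrix.one_apply_ne hjk, Matrix.one_apply_ne]
    simp only [ne_eq, Fin.castLE_inj]
    exact hjk

lemma row_block {m mt mr : ℕ} (hmt : mt ≤ m) (hmr : mr ≤ m)
    {H : Matrix (Fin m) (Fin m) ℂ} (hH : H * Hᴴ = 1) :
    sub21 mt mr hmt hmr H * (sub21 mt mr hmt hmr H)ᴴ +
      sub22 mt mr hmt hmr H * (sub22 mt mr hmt hmr H)ᴴ = 1 := by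
  ext i k
  have h := congrFun (congrFun hH ⟨mr + i, by omega⟩) ⟨mr + k, by omega⟩
  rw [Matrix.mul_apply] at h
  rw [Matrix.add_apply, Matrix.mul_apply, Matrix.mul_apply]
  rw [sum_split hmt (fun j => H ⟨mr + i, by omega⟩ j * Hᴴ j ⟨mr + k, by omega⟩)] at h
  simp only [conjTranspose_apply, sub21, sub22, Matrix.of_apply] at h ⊢
  rw [h]
  by_cases hik : i = k
  · subst hik; simp
  · rw [Matrix.one_apply_ne hik, Matrix.one_apply_ne]
    simp only [ne_eq, Fin.mk.injEq]
    omega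

set_option maxHeartbeats 2000000 in
/-- **Zero outage below the guaranteed rate.** For `m_t + m_r > m` and any
multiplexing rate `r < m_t+m_r−m`, the outage probability at rate
`r·log(1+ρ)` under the Haar probability measure on `U(m)` is exactly zero. -/
theorem outage_probability_eq_zero (m mt mr : ℕ) (hmt : mt ≤ m) (hmr : mr ≤ m)
    (hsum : m < mt + mr) (ρ : ℝ) (hρ : 0 ≤ ρ) (r : ℝ) (hr : r < ((mt + mr - m : ℕ) : ℝ))
    (μ : Measure (Matrix.unitaryGroup (Fin m) ℂ)) [μ.IsHaarMeasure] [IsProbabilityMeasure μ] :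
    μ {U : Matrix.unitaryGroup (Fin m) ℂ |
        ‖(1 + (ρ : ℂ) • ((sub11 mt mr hmt hmr (U : Matrix (Fin m) (Fin m) ℂ))ᴴ
          * sub11 mt mr hmt hmr (U : Matrix (Fin m) (Fin m) ℂ))).det‖ < (1 + ρ) ^ r} = 0 := by
  have hset : {U : Matrix.unitaryGroup (Fin m) ℂ |
        ‖(1 + (ρ : ℂ) • ((sub11 mt mr hmt hmr (U : Matrix (Fin m) (Fin m) ℂ))ᴴ
          * sub11 mt mr hmt hmr (U : Matrix (Fin m) (Fin m) ℂ))).det‖ < (1 + ρ) ^ r} = ∅ := by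
    rw [Set.eq_empty_iff_forall_notMem]
    intro U hU
    simp only [Set.mem_setOf_eq] at hU
    set H : Matrix (Fin m) (Fin m) ℂ := (U : Matrix (Fin m) (Fin m) ℂ) with hHdef
    have hU1 : Hᴴ * H = 1 := by
      have h := (Matrix.mem_unitaryGroup_iff' (A := H)).mp U.2
      rwa [Matrix.star_eq_conjTranspose] at h
    have hU2 : H * Hᴴ = 1 := by
      have h := (Matrix.mem_unitaryGroup_iff (A := H)).mp U.2
      rwa [Matrix.star_eq_conjTranspose] at h
    set A := sub11 mt mr hmt hmr H with hA
    set B := sub21 mt mr hmt hmr H with hB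
    set C := sub22 mt mr hmt hmr H with hC
    have hAB : Aᴴ * A = 1 - Bᴴ * B := eq_sub_of_add_eq (col_block hmt hmr hU1)
    have hBC : B * Bᴴ = 1 - C * Cᴴ := eq_sub_of_add_eq (row_block hmt hmr hU2)
    set p : ℝ := 1 + ρ with hpdef
    have hp1 : (1:ℝ) ≤ p := le_add_of_nonneg_right hρ
    have hp0 : (0:ℝ) < p := by linarith
    have hpc : (p:ℂ) ≠ 0 := by exact_mod_cast hp0.ne'
    have h1c : (1 + (ρ:ℂ)) ≠ 0 := by
      have : (p:ℂ) = 1 + (ρ:ℂ) := by push_cast [hpdef]; ring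
      rwa [this] at hpc
    have eq1 : (1 : Matrix (Fin mt) (Fin mt) ℂ) + (ρ:ℂ) • (Aᴴ * A)
        = (p:ℂ) • (1 + Bᴴ * ((-(ρ/p) : ℂ) • B)) := by
      rw [hAB, Matrix.mul_smul]
      match_scalars <;> push_cast [hpdef] <;> field_simp <;> ring
    have eq2 : (1 : Matrix (Fin (m - mr)) (Fin (m - mr)) ℂ) + ((-(ρ/p) : ℂ)) • (B * Bᴴ)
        = ((p:ℂ))⁻¹ • (1 + (ρ:ℂ) • (C * Cᴴ)) := by
      rw [hBC]
      match_scalars <;> push_cast [hpdef] <;> field_simp <;> ring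
    have hdet : ‖((1 + (ρ:ℂ) • (Aᴴ * A)).det)‖
        = p ^ mt * (p⁻¹) ^ (m - mr) * ‖((1 + (ρ:ℂ) • (C * Cᴴ)).det)‖ := by
      rw [eq1, Matrix.det_smul, Matrix.det_one_add_mul_comm, Matrix.smul_mul, eq2,
        Matrix.det_smul]
      simp only [norm_mul, norm_pow, norm_inv, Complex.norm_real, Real.norm_eq_abs, Fintype.card_fin,
        abs_of_pos hp0, abs_of_pos (inv_pos.mpr hp0)]
      ring
    have habs := one_le_abs_det_one_add_smul hρ C
    set k := mt + mr - m with hkdef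
    have hkeq : k + (m - mr) = mt := by omega
    have hpow : p ^ mt * p⁻¹ ^ (m - mr) = p ^ k := by
      rw [← hkeq, pow_add, mul_assoc, ← mul_pow, mul_inv_cancel₀ hp0.ne', one_pow, mul_one]
    set Y := ‖((1 + (ρ:ℂ) • (C * Cᴴ)).det)‖ with hYdef
    rw [hdet] at hU
    have h3 : p ^ mt * p⁻¹ ^ (m - mr) * Y = p ^ k * Y := by rw [hpow]
    rw [h3] at hU
    have h4 : p ^ k ≤ p ^ k * Y := le_mul_of_one_le_right (pow_pos hp0 k).le habs
    have hrp : p ^ r ≤ p ^ (k:ℕ) := by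
      rw [← Real.rpow_natCast p k]
      exact Real.rpow_le_rpow_of_exponent_le hp1 hr.le
    linarith
  rw [hset, measure_empty]
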